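/- For every integer k ≥ 1, setting m = 2k² + 4k + 1 and M = (m−1)/2, one has the identity t^{e(2k,k)}·D_{2k,k}(t) = (t² − 1)·Ψ_m(t) in ℤ[t, t⁻¹]; in particular D_{2k,k}(t) = (t^{2k²+4k+1} + 1)(t − 1). -/

import Mathlib

open LaurentPolynomial

/-- The Laurent polynomial `D_{n,k}(t) = -t^{(k+2)n+1} + t^{(k+1)(n+1)}(t^{k+1}+1)
- t^{k(n+3)+1} + t - 1` in `ℤ[t,t⁻¹]`. -/
noncomputable def D (n k : ℤ) : LaurentPolynomial ℤ :=
  -T ((k + 2) * n + 1) + T ((k + 1) * (n + 1)) * (T (k + 1) + 1) -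
    T (k * (n + 3) + 1) + T 1 - 1

/-- The exponent `e(n,k) = n(n-1)/2 + k(k-1) - 2nk`. -/
def e (n k : ℤ) : ℤ := n * (n - 1) / 2 + k * (k - 1) - 2 * n * k

/-- For odd `m ≥ 1` with `M = (m-1)/2`, the symmetric Laurent polynomial
`Ψ_m(t) = ∑_{j=-M}^{M} (-1)^{M+j} t^j`. -/
noncomputable def Psi (m : ℤ) : LaurentPolynomial ℤ :=
  ∑ j ∈ Finset.Icc (-((m - 1) / 2)) ((m - 1) / 2),
    ((((m - 1) / 2 + j).negOnePow : ℤ) : LaurentPolynomial ℤ) * T j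

private lemma sum_Icc_top (a b : ℤ) (h : a ≤ b + 1) (f : ℤ → LaurentPolynomial ℤ) :
    ∑ i ∈ Finset.Icc a (b + 1), f i = ∑ i ∈ Finset.Icc a b, f i + f (b + 1) := by
  rw [show Finset.Icc a (b + 1) = insert (b + 1) (Finset.Icc a b) by
    ext x; simp only [Finset.mem_insert, Finset.mem_Icc]; omega,
    Finset.sum_insert (by simp)]
  ring

private lemma key (N : ℕ) :
    (T 1 + 1) * ∑ i ∈ Finset.Icc (0 : ℤ) (2 * (N : ℤ)),
        (((i.negOnePow : ℤ)) : LaurentPolynomial ℤ) * T i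
      = T (2 * (N : ℤ) + 1) + 1 := by
  induction N with
  | zero =>
    norm_num [Finset.Icc_self, Int.negOnePow_zero, T_zero]
  | succ N ih =>
    have hc : (2 * ((N : ℤ) + 1)) = (2 * (N : ℤ) + 1) + 1 := by ring
    push_cast
    rw [hc, sum_Icc_top _ _ (by positivity),
      show (2 * (N : ℤ) + 1) = (2 * (N : ℤ)) + 1 by ring,
      sum_Icc_top _ _ (by positivity),
      Int.negOnePow_odd _ ⟨(N : ℤ), by ring⟩,
      Int.negOnePow_even _ ⟨(N : ℤ) + 1, by ring⟩]
    push_cast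
    rw [mul_add, mul_add, show (2 * (N : ℤ)) + 1 = 2 * (N : ℤ) + 1 by ring, ih]
    have h1 : (T (2 * (N : ℤ) + 1 + 1 + 1) : LaurentPolynomial ℤ)
        = T 1 * T (2 * (N : ℤ) + 1 + 1) := by
      rw [show (2 * (N : ℤ) + 1 + 1 + 1) = 1 + (2 * (N : ℤ) + 1 + 1) by ring, T_add]
    have h2 : (T (2 * (N : ℤ) + 1 + 1) : LaurentPolynomial ℤ)
        = T 1 * T (2 * (N : ℤ) + 1) := by
      rw [show (2 * (N : ℤ) + 1 + 1) = 1 + (2 * (N : ℤ) + 1) by ring, T_add]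
    rw [h1, h2]
    ring

/-- For `k ≥ 1`, with `m = 2k² + 4k + 1`, one has
`t^{e(2k,k)} · D_{2k,k}(t) = (t² - 1) · Ψ_m(t)`; in particular
`D_{2k,k}(t) = (t^{2k²+4k+1} + 1)(t - 1)`. -/
theorem D_two_k_k_eq (k : ℤ) (hk : 1 ≤ k) :
    T (e (2 * k) k) * D (2 * k) k = (T 2 - 1) * Psi (2 * k ^ 2 + 4 * k + 1) ∧
    D (2 * k) k = (T (2 * k ^ 2 + 4 * k + 1) + 1) * (T 1 - 1) := by
  set M : ℤ := k ^ 2 + 2 * k with hMdef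
  have hM : 0 ≤ M := by nlinarith
  have hD : D (2 * k) k = (T (2 * k ^ 2 + 4 * k + 1) + 1) * (T 1 - 1) := by
    rw [D, show (k + 2) * (2 * k) + 1 = 2 * k ^ 2 + 4 * k + 1 by ring,
      show (k + 1) * (2 * k + 1) = 2 * k ^ 2 + 3 * k + 1 by ring,
      show k * (2 * k + 3) + 1 = 2 * k ^ 2 + 3 * k + 1 by ring,
      mul_add, mul_one, ← T_add,
      show 2 * k ^ 2 + 3 * k + 1 + (k + 1) = 2 * k ^ 2 + 4 * k + 2 by ring]
    have h1 : T (2 * k ^ 2 + 4 * k + 2 : ℤ) = (T (2 * k ^ 2 + 4 * k + 1) * T 1 : LaurentPolynomial ℤ) := by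
      rw [show (2 * k ^ 2 + 4 * k + 2 : ℤ) = (2 * k ^ 2 + 4 * k + 1) + 1 by ring, T_add]
    rw [h1]; ring
  refine ⟨?_, hD⟩
  -- compute e
  have he : e (2 * k) k = -M := by
    rw [e, show 2 * k * (2 * k - 1) = (k * (2 * k - 1)) * 2 by ring,
      Int.mul_ediv_cancel _ two_ne_zero, hMdef]
    ring
  -- compute (m-1)/2
  have hm : (2 * k ^ 2 + 4 * k + 1 - 1) / 2 = M := by
    rw [show 2 * k ^ 2 + 4 * k + 1 - 1 = M * 2 by rw [hMdef]; ring,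
      Int.mul_ediv_cancel _ two_ne_zero]
  -- reindex Psi
  have hre : T M * Psi (2 * k ^ 2 + 4 * k + 1)
      = ∑ i ∈ Finset.Icc (0 : ℤ) (2 * M),
          (((i.negOnePow : ℤ)) : LaurentPolynomial ℤ) * T i := by
    rw [Psi, hm, Finset.mul_sum]
    rw [show Finset.Icc (0 : ℤ) (2 * M)
        = Finset.map (addRightEmbedding M) (Finset.Icc (-M) M) by
      rw [Finset.map_add_right_Icc]; congr 1 <;> ring]
    rw [Finset.sum_map]
    refine Finset.sum_congr rfl fun j _ => ?_
    rw [addRightEmbedding_apply, show j + M = M + j from add_comm j M, T_add M j]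
    ring
  have hkey := key M.toNat
  rw [Int.toNat_of_nonneg hM] at hkey
  rw [← hre, show 2 * M + 1 = 2 * k ^ 2 + 4 * k + 1 by rw [hMdef]; ring] at hkey
  -- combine
  rw [he, hD, ← hkey]
  have hT2 : (T (2 : ℤ) : LaurentPolynomial ℤ) = T 1 * T 1 := by
    rw [show (2:ℤ) = 1 + 1 by norm_num, T_add]
  have hTM : (T (-M) * T M : LaurentPolynomial ℤ) = 1 := by
    rw [← T_add]; simp
  calc T (-M) * ((T 1 + 1) * (T M * Psi (2 * k ^ 2 + 4 * k + 1)) * (T 1 - 1))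
      = (T (-M) * T M) * ((T 1 + 1) * (T 1 - 1)) * Psi (2 * k ^ 2 + 4 * k + 1) := by ring
    _ = (T 2 - 1) * Psi (2 * k ^ 2 + 4 * k + 1) := by rw [hTM, hT2]; ring
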